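/- In a 3-connected graph G, if edges e1 = (v1,v2) and e2 = (v2,v3) share the vertex v2, and e3 = (v4,v5) is vertex-disjoint from e1 and e2, then there exists a simple cycle of G containing e1, e2, and e3. -/

import Mathlib

open SimpleGraph

namespace CycleWedgeAux



variable {W : Type*} {K : SimpleGraph W}

lemma walks_avoiding (K : SimpleGraph W) (s : Set W)
    (h : (K.induce sᶜ).Connected) {a b : W} (ha : a ∉ s) (hb : b ∉ s) :
    ∃ p : K.Walk a b, ∀ x ∈ p.support, x ∉ s := by
  obtain ⟨q⟩ := h.preconnected ⟨a, ha⟩ ⟨b, hb⟩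
  let f : (K.induce sᶜ) →g K := ⟨Subtype.val, fun {x y} hxy => hxy⟩
  refine ⟨q.map f, ?_⟩
  intro x hx
  rw [SimpleGraph.Walk.support_map, List.mem_map] at hx
  obtain ⟨y, _, rfl⟩ := hx
  exact y.2

lemma not_mem_takeUntil [DecidableEq W] {u w x : W} {p : K.Walk u w} (hp : p.IsPath)
    (hx : x ∈ p.support) (hxw : x ≠ w) : w ∉ (p.takeUntil x hx).support := by
  intro hw
  have hnd : p.support.Nodup := hp.support_nodup
  rw [← p.take_spec hx, Walk.support_append] at hnd
  have hwd : w ∈ (p.dropUntil x hx).support := Walk.end_mem_support _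
  rw [Walk.support_eq_cons (p.dropUntil x hx)] at hwd
  rcases List.mem_cons.mp hwd with hwd | hwd
  · exact hxw hwd.symm
  · exact List.disjoint_of_nodup_append hnd hw hwd

lemma exists_firstHit (T : W → Prop) [DecidablePred T] :
    ∀ {v u : W} (R : K.Walk v u), T u →
      ∃ (x : W) (S : K.Walk v x), T x ∧ (∀ y ∈ S.support, y ∈ R.support) ∧
        (∀ y ∈ S.support, T y → y = x) := by
  intro v u R
  induction R with
  | nil =>
    intro hT
    exact ⟨_, Walk.nil, hT, by simp, by simp⟩
  | @cons a c u h R ih =>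
    intro hT
    by_cases hTa : T a
    · exact ⟨a, Walk.nil, hTa, by simp, by simp⟩
    · obtain ⟨x, S, hTx, hsub, hhit⟩ := ih hT
      refine ⟨x, Walk.cons h S, hTx, ?_, ?_⟩
      · intro y hy
        rw [Walk.support_cons, List.mem_cons] at hy ⊢
        rcases hy with rfl | hy
        · exact Or.inl rfl
        · exact Or.inr (hsub y hy)
      · intro y hy hTy
        rw [Walk.support_cons, List.mem_cons] at hy
        rcases hy with rfl | hy
        · exact absurd hTy hTa
        · exact hhit y hy hTy

lemma step_mem [DecidableEq W] {u w v : W} (huv : u ≠ v) (hwv : K.Adj w v)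
    {p q : K.Walk u w} (hp : p.IsPath) (hq : q.IsPath)
    (hcom : ∀ x ∈ p.support, x ∈ q.support → x = u ∨ x = w)
    (hvp : v ∈ p.support) :
    ∃ (p1 q1 : K.Walk u v), p1.IsPath ∧ q1.IsPath ∧
      ∀ x ∈ p1.support, x ∈ q1.support → x = u ∨ x = v := by
  have hvw : v ≠ w := fun h => (h ▸ hwv).ne' rfl
  have hvq : v ∉ q.support := by
    intro hh
    rcases hcom v hvp hh with rfl | rfl
    · exact huv rfl
    · exact hvw rfl
  refine ⟨p.takeUntil v hvp, q.append (Walk.cons hwv Walk.nil), hp.takeUntil _, ?_, ?_⟩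
  · rw [Walk.isPath_def, Walk.support_append]
    refine List.Nodup.append hq.support_nodup ?_ ?_
    · simp
    intro y hy hy'
    simp only [Walk.support_cons, Walk.support_nil, List.tail_cons, List.mem_singleton] at hy'
    subst hy'
    exact hvq hy
  · intro x hx1 hx2
    rw [Walk.mem_support_append_iff] at hx2
    have hxp : x ∈ p.support := Walk.support_takeUntil_subset _ _ hx1
    rcases hx2 with hx2 | hx2
    · rcases hcom x hxp hx2 with rfl | rfl
      · exact Or.inl rfl
      · exact absurd hx1 (not_mem_takeUntil hp hvp hvw)
    · have hx2' : x = w ∨ x = v := by simpa using hx2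
      rcases hx2' with rfl | rfl
      · exact absurd hx1 (not_mem_takeUntil hp hvp hvw)
      · exact Or.inr rfl

lemma step_avoid [DecidableEq W] {u w v x : W} (huv : u ≠ v) (hwv : K.Adj w v)
    {p q : K.Walk u w} (hp : p.IsPath) (hq : q.IsPath)
    (hcom : ∀ y ∈ p.support, y ∈ q.support → y = u ∨ y = w)
    (hvq : v ∉ q.support)
    {S : K.Walk v x} (hS : S.IsPath) (hwS : w ∉ S.support)
    (hxp : x ∈ p.support)
    (hhit : ∀ y ∈ S.support, (y ∈ p.support ∨ y ∈ q.support) → y = x) :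
    ∃ (p1 q1 : K.Walk u v), p1.IsPath ∧ q1.IsPath ∧
      ∀ y ∈ p1.support, y ∈ q1.support → y = u ∨ y = v := by
  have hxw : x ≠ w := fun h => hwS (h ▸ Walk.end_mem_support S)
  have hxtail : x ∉ S.reverse.support.tail := by
    intro hh
    have := hS.reverse.support_nodup
    rw [Walk.support_eq_cons S.reverse] at this
    exact (List.nodup_cons.mp this).1 hh
  have htail_sub : ∀ y ∈ S.reverse.support.tail, y ∈ S.support := by
    intro y hy
    have : y ∈ S.reverse.support := List.mem_of_mem_tail hy
    rwa [Walk.support_reverse, List.mem_reverse] at this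
  refine ⟨(p.takeUntil x hxp).append S.reverse, q.append (Walk.cons hwv Walk.nil), ?_, ?_, ?_⟩
  · rw [Walk.isPath_def, Walk.support_append]
    refine List.Nodup.append (hp.takeUntil hxp).support_nodup ?_ ?_
    · have := hS.reverse.support_nodup
      rw [Walk.support_eq_cons S.reverse] at this
      exact (List.nodup_cons.mp this).2
    · intro y hy hy'
      have hyS : y ∈ S.support := htail_sub y hy'
      have hyp : y ∈ p.support := Walk.support_takeUntil_subset _ _ hy
      have : y = x := hhit y hyS (Or.inl hyp)
      subst this
      exact hxtail hy'
  · rw [Walk.isPath_def, Walk.support_append]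
    refine List.Nodup.append hq.support_nodup ?_ ?_
    · simp
    intro y hy hy'
    simp only [Walk.support_cons, Walk.support_nil, List.tail_cons, List.mem_singleton] at hy'
    subst hy'
    exact hvq hy
  · intro y hy1 hy2
    rw [Walk.mem_support_append_iff] at hy2
    have hy2' : y ∈ q.support ∨ y = w ∨ y = v := by
      rcases hy2 with hy2 | hy2
      · exact Or.inl hy2
      · have : y = w ∨ y = v := by simpa using hy2
        rcases this with rfl | rfl
        · exact Or.inr (Or.inl rfl)
        · exact Or.inr (Or.inr rfl)
    rw [Walk.support_append, List.mem_append] at hy1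
    rcases hy2' with hy2' | rfl | rfl
    · rcases hy1 with hy1 | hy1
      · have hyp : y ∈ p.support := Walk.support_takeUntil_subset _ _ hy1
        rcases hcom y hyp hy2' with rfl | rfl
        · exact Or.inl rfl
        · exact absurd hy1 (not_mem_takeUntil hp hxp hxw)
      · have : y = x := hhit y (htail_sub y hy1) (Or.inr hy2')
        subst this
        exact absurd hy1 hxtail
    · rcases hy1 with hy1 | hy1
      · exact absurd hy1 (not_mem_takeUntil hp hxp hxw)
      · exact absurd (htail_sub _ hy1) hwS
    · exact Or.inr rfl

lemma two_paths [DecidableEq W] (K : SimpleGraph W)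
    (hK : ∀ w a b : W, a ≠ w → b ≠ w → ∃ p : K.Walk a b, w ∉ p.support)
    (u v : W) (huv : u ≠ v) (R0 : K.Walk u v) :
    ∃ (p q : K.Walk u v), p.IsPath ∧ q.IsPath ∧
      ∀ x ∈ p.support, x ∈ q.support → x = u ∨ x = v := by
  suffices H : ∀ n (v : W), u ≠ v → ∀ R : K.Walk u v, R.length ≤ n →
      ∃ (p q : K.Walk u v), p.IsPath ∧ q.IsPath ∧
        ∀ x ∈ p.support, x ∈ q.support → x = u ∨ x = v by
    exact H R0.length v huv R0 le_rfl
  intro n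
  induction n using Nat.strong_induction_on with
  | _ n ih =>
    intro v huv R hR
    by_cases hadj : K.Adj u v
    · refine ⟨Walk.cons hadj Walk.nil, Walk.cons hadj Walk.nil, ?_, ?_, ?_⟩
      · rw [Walk.cons_isPath_iff]
        exact ⟨Walk.IsPath.nil, by simpa using huv⟩
      · rw [Walk.cons_isPath_iff]
        exact ⟨Walk.IsPath.nil, by simpa using huv⟩
      · intro x hx _
        simpa using hx
    · have hBp : R.bypass.reverse.IsPath := R.bypass_isPath.reverse
      have hBl : R.bypass.reverse.length ≤ n := by
        rw [Walk.length_reverse]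
        exact le_trans (Walk.length_bypass_le R) hR
      generalize hQ : R.bypass.reverse = Q at hBp hBl
      clear hQ hR R
      cases Q with
      | nil => exact absurd rfl huv
      | @cons _ w _ h t =>
        have hwu : w ≠ u := fun hh => hadj (hh ▸ h).symm
        rw [Walk.length_cons] at hBl
        obtain ⟨p, q, hp, hq, hcom⟩ :=
          ih t.length (by omega) w (Ne.symm hwu) t.reverse (by rw [Walk.length_reverse])
        have hwv : K.Adj w v := h.symm
        by_cases hvp : v ∈ p.support
        · exact step_mem huv hwv hp hq hcom hvp
        by_cases hvq : v ∈ q.support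
        · obtain ⟨p1, q1, h1, h2, h3⟩ :=
            step_mem huv hwv hq hp (fun x hx hx' => hcom x hx' hx) hvq
          exact ⟨p1, q1, h1, h2, h3⟩
        · have hvw : v ≠ w := fun hh => (hh ▸ hwv).ne' rfl
          obtain ⟨Rvu, hwR⟩ := hK w v u hvw hwu.symm
          have hTu : (u ∈ p.support ∨ u ∈ q.support) := Or.inl (Walk.start_mem_support p)
          obtain ⟨x, S, hTx, hsub, hhit⟩ :=
            exists_firstHit (fun y => y ∈ p.support ∨ y ∈ q.support) Rvu hTu
          have hwS : w ∉ S.bypass.support := by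
            intro hh
            exact hwR (hsub w (Walk.support_bypass_subset S hh))
          have hhit' : ∀ y ∈ S.bypass.support, (y ∈ p.support ∨ y ∈ q.support) → y = x :=
            fun y hy => hhit y (Walk.support_bypass_subset S hy)
          rcases hTx with hxp | hxq
          · exact step_avoid huv hwv hp hq hcom hvq S.bypass_isPath hwS hxp hhit'
          · obtain ⟨p1, q1, h1, h2, h3⟩ :=
              step_avoid huv hwv hq hp (fun y hy hy' => hcom y hy' hy) hvp
                S.bypass_isPath hwS hxq (fun y hy hy' => hhit' y hy hy'.symm)
            exact ⟨p1, q1, h1, h2, h3⟩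



variable {V : Type*}

/-- Auxiliary graph: restrict `v2`'s neighbourhood to `{v1, v3}` and add a new
vertex (`none`) adjacent to exactly `v4` and `v5`. -/
def auxK (G : SimpleGraph V) (v1 v2 v3 v4 v5 : V) : SimpleGraph (Option V) where
  Adj x y := match x, y with
    | some a, some b => G.Adj a b ∧ (a = v2 → b = v1 ∨ b = v3) ∧ (b = v2 → a = v1 ∨ a = v3)
    | some a, none => a = v4 ∨ a = v5
    | none, some b => b = v4 ∨ b = v5
    | none, none => False
  symm := by
    constructor
    rintro (_ | a) (_ | b) h
    · exact h.elim
    · exact h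
    · exact h
    · exact ⟨h.1.symm, h.2.2, h.2.1⟩
  loopless := by
    constructor
    rintro (_ | a) h
    · exact h.elim
    · exact G.loopless.irrefl a h.1

variable {G : SimpleGraph V} {v1 v2 v3 v4 v5 : V}

lemma auxK_adj_ss {a b : V} : (auxK G v1 v2 v3 v4 v5).Adj (some a) (some b) ↔
    G.Adj a b ∧ (a = v2 → b = v1 ∨ b = v3) ∧ (b = v2 → a = v1 ∨ a = v3) := Iff.rfl

lemma auxK_adj_sn {a : V} : (auxK G v1 v2 v3 v4 v5).Adj (some a) none ↔
    (a = v4 ∨ a = v5) := Iff.rfl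

lemma auxK_adj_ns {b : V} : (auxK G v1 v2 v3 v4 v5).Adj none (some b) ↔
    (b = v4 ∨ b = v5) := Iff.rfl

lemma auxK_adj_nn : (auxK G v1 v2 v3 v4 v5).Adj none none ↔ False := Iff.rfl

lemma liftWalk :
    ∀ {a b : V} (p : G.Walk a b), v2 ∉ p.support →
      ∃ q : (auxK G v1 v2 v3 v4 v5).Walk (some a) (some b),
        q.support = p.support.map some := by
  intro a b p
  induction p with
  | nil => exact fun _ => ⟨Walk.nil, by simp⟩
  | @cons a c b h t ih =>
    intro hv2
    rw [Walk.support_cons, List.mem_cons] at hv2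
    push_neg at hv2
    obtain ⟨q, hq⟩ := ih hv2.2
    have ha : a ≠ v2 := fun hh => hv2.1 hh.symm
    have hc : c ≠ v2 := fun hh => hv2.2 (hh ▸ Walk.start_mem_support t)
    refine ⟨Walk.cons (auxK_adj_ss.mpr ⟨h, fun hh => absurd hh ha, fun hh => absurd hh hc⟩) q, ?_⟩
    rw [Walk.support_cons, hq, Walk.support_cons, List.map_cons]

lemma downWalk :
    ∀ {x y : Option V} (r : (auxK G v1 v2 v3 v4 v5).Walk x y),
      (∀ z ∈ r.support, z ≠ none ∧ z ≠ some v2) → ∀ {a b : V},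
      x = some a → y = some b → ∃ r' : G.Walk a b, r'.support.map some = r.support := by
  intro x y r
  induction r with
  | nil =>
    rintro _ a b rfl hy
    obtain rfl : a = b := by injection hy
    exact ⟨Walk.nil, by simp⟩
  | @cons x m y h t ih =>
    rintro hav a b rfl rfl
    have hm : m ≠ none ∧ m ≠ some v2 := hav m (by simp)
    obtain ⟨c, rfl⟩ := Option.ne_none_iff_exists'.mp hm.1
    have hG : G.Adj a c := (auxK_adj_ss.mp h).1
    obtain ⟨t', ht'⟩ := ih (fun z hz => hav z (by simp [hz])) rfl rfl
    exact ⟨Walk.cons hG t', by rw [Walk.support_cons, Walk.support_cons, List.map_cons, ht']⟩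

lemma extract (n24 : v2 ≠ v4) (n25 : v2 ≠ v5)
    {p : (auxK G v1 v2 v3 v4 v5).Walk (some v2) none} (hp : p.IsPath) :
    ∃ (c1 c4 : V) (P : G.Walk c1 c4), (c1 = v1 ∨ c1 = v3) ∧ (c4 = v4 ∨ c4 = v5) ∧
      P.IsPath ∧ v2 ∉ P.support ∧ ∀ z ∈ P.support, some z ∈ p.support := by
  cases p with
  | @cons _ m _ h1 t =>
    have hpsup : (Walk.cons h1 t).support = some v2 :: t.support := Walk.support_cons _ _
    rw [Walk.cons_isPath_iff] at hp
    obtain ⟨ht, hv2t⟩ := hp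
    cases m with
    | none => exact absurd (auxK_adj_sn.mp h1) (by push_neg; exact ⟨n24, n25⟩)
    | some c1 =>
      have hc1 : c1 = v1 ∨ c1 = v3 := (auxK_adj_ss.mp h1).2.1 rfl
      -- decompose t from the end
      have hBp : t.reverse.IsPath := ht.reverse
      generalize hQ : t.reverse = Q at hBp
      have hQsup : t.support.reverse = Q.support := by rw [← hQ, Walk.support_reverse]
      cases Q with
      | @cons _ m2 _ h2 r =>
        cases m2 with
        | none => exact absurd h2 (auxK_adj_nn.not.mpr not_false)
        | some c4 =>
          have hc4 : c4 = v4 ∨ c4 = v5 := auxK_adj_ns.mp h2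
          have htsup : t.support = r.support.reverse ++ [none] := by
            have : t.support.reverse = none :: r.support := by
              rw [hQsup, Walk.support_cons]
            calc t.support = t.support.reverse.reverse := by rw [List.reverse_reverse]
              _ = (none :: r.support).reverse := by rw [this]
              _ = r.support.reverse ++ [none] := by simp
          have htnd : (r.support.reverse ++ [none]).Nodup := htsup ▸ ht.support_nodup
          have hnone : (none : Option V) ∉ r.support := by
            intro hh
            exact List.disjoint_of_nodup_append htnd (List.mem_reverse.mpr hh) (by simp)
          have hrsub : ∀ z ∈ r.support, z ∈ t.support := by
            intro z hz
            rw [htsup]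
            exact List.mem_append_left _ (List.mem_reverse.mpr hz)
          have hv2r : some v2 ∉ r.support := fun hh => hv2t (hrsub _ hh)
          obtain ⟨P, hP⟩ := downWalk r.reverse
            (fun z hz => by
              rw [Walk.support_reverse, List.mem_reverse] at hz
              exact ⟨fun hh => hnone (hh ▸ hz), fun hh => hv2r (hh ▸ hz)⟩)
            rfl rfl
          have hPmap : P.support.map some = r.support.reverse := by
            rw [hP, Walk.support_reverse]
          refine ⟨c1, c4, P, hc1, hc4, ?_, ?_, ?_⟩
          · rw [Walk.isPath_def]
            refine List.Nodup.of_map some ?_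
            rw [hPmap]
            exact (List.nodup_append'.mp htnd).1
          · intro hh
            have : some v2 ∈ P.support.map some := List.mem_map_of_mem hh
            rw [hPmap, List.mem_reverse] at this
            exact hv2r this
          · intro z hz
            have : some z ∈ P.support.map some := List.mem_map_of_mem hz
            rw [hPmap, List.mem_reverse] at this
            rw [hpsup]
            exact List.mem_cons_of_mem _ (hrsub _ this)



variable {V : Type*}

lemma assemble {G : SimpleGraph V} {a b c d e : V}
    (hab : G.Adj a b) (hbc : G.Adj b c) (hde : G.Adj d e)
    (hac : a ≠ c) (hbd : b ≠ d) (hbe : b ≠ e)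
    {P : G.Walk a d} {Q : G.Walk c e} (hP : P.IsPath) (hQ : Q.IsPath)
    (hbP : b ∉ P.support) (hbQ : b ∉ Q.support)
    (hdisj : ∀ x ∈ P.support, x ∉ Q.support) :
    ∃ (w : V) (cyc : G.Walk w w), cyc.IsCycle ∧
      s(a, b) ∈ cyc.edges ∧ s(b, c) ∈ cyc.edges ∧ s(d, e) ∈ cyc.edges := by
  let E : G.Walk e b := Q.reverse.append (Walk.cons hbc.symm Walk.nil)
  let F : G.Walk d b := Walk.cons hde E
  let D : G.Walk a b := P.append F
  have hEsup : E.support = Q.support.reverse ++ [b] := by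
    show (Q.reverse.append _).support = _
    rw [Walk.support_append, Walk.support_reverse]
    rfl
  have hDsup : D.support = P.support ++ (Q.support.reverse ++ [b]) := by
    show (P.append F).support = _
    rw [Walk.support_append]
    have : F.support.tail = E.support := by
      show (Walk.cons hde E).support.tail = E.support
      rw [Walk.support_cons]
      rfl
    rw [this, hEsup]
  have hDpath : D.IsPath := by
    rw [Walk.isPath_def, hDsup]
    refine List.Nodup.append hP.support_nodup ?_ ?_
    · refine List.Nodup.append (List.nodup_reverse.mpr hQ.support_nodup) (by simp) ?_
      intro y hy hy'
      rw [List.mem_singleton] at hy'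
      subst hy'
      exact hbQ (List.mem_reverse.mp hy)
    · intro y hy hy'
      rw [List.mem_append] at hy'
      rcases hy' with hy' | hy'
      · exact hdisj y hy (List.mem_reverse.mp hy')
      · rw [List.mem_singleton] at hy'
        subst hy'
        exact hbP hy
  have hDedges : D.edges = P.edges ++ (s(d, e) :: (Q.reverse.edges ++ [s(c, b)])) := by
    show (P.append F).edges = _
    rw [Walk.edges_append]
    congr 1
    show (Walk.cons hde E).edges = _
    rw [Walk.edges_cons]
    congr 1
    show (Q.reverse.append _).edges = _
    rw [Walk.edges_append]
    rfl
  have hnotD : s(b, a) ∉ D.edges := by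
    rw [hDedges]
    intro hmem
    rw [List.mem_append] at hmem
    rcases hmem with hmem | hmem
    · exact hbP (Walk.fst_mem_support_of_mem_edges P hmem)
    · rw [List.mem_cons] at hmem
      rcases hmem with hmem | hmem
      · rw [Sym2.eq_iff] at hmem
        rcases hmem with ⟨rfl, rfl⟩ | ⟨rfl, rfl⟩
        · exact hbd rfl
        · exact hbe rfl
      · rw [List.mem_append] at hmem
        rcases hmem with hmem | hmem
        · have : b ∈ Q.reverse.support := Walk.fst_mem_support_of_mem_edges Q.reverse hmem
          rw [Walk.support_reverse, List.mem_reverse] at this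
          exact hbQ this
        · rw [List.mem_singleton, Sym2.eq_iff] at hmem
          rcases hmem with ⟨rfl, rfl⟩ | ⟨_, rfl⟩
          · exact hac rfl
          · exact hac rfl
  refine ⟨b, Walk.cons hab.symm D, ?_, ?_, ?_, ?_⟩
  · rw [Walk.cons_isCycle_iff]
    exact ⟨hDpath, hnotD⟩
  · rw [Walk.edges_cons, List.mem_cons]
    exact Or.inl (Sym2.eq_swap)
  · rw [Walk.edges_cons, List.mem_cons, hDedges]
    refine Or.inr ?_
    rw [List.mem_append]
    refine Or.inr ?_
    rw [List.mem_cons]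
    refine Or.inr ?_
    rw [List.mem_append]
    rw [List.mem_singleton]
    exact Or.inr Sym2.eq_swap
  · rw [Walk.edges_cons, List.mem_cons, hDedges]
    refine Or.inr ?_
    rw [List.mem_append, List.mem_cons]
    exact Or.inr (Or.inl rfl)


end CycleWedgeAux

/-- `G` is `k`-vertex-connected: more than `k` vertices and no set of fewer than `k`
vertices disconnects it. -/
def IsKConnected {V : Type*} [Fintype V] (G : SimpleGraph V) (k : ℕ) : Prop :=
  k + 1 ≤ Fintype.card V ∧
    ∀ S : Finset V, S.card < k → (G.induce (↑S : Set V)ᶜ).Connected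

/-- In a 3-connected graph, two edges sharing an endpoint together with a third
vertex-disjoint edge lie on a common simple cycle. -/
theorem cycle_through_wedge_and_edge {V : Type*} [Fintype V]
    (G : SimpleGraph V) (h3 : IsKConnected G 3)
    (v1 v2 v3 v4 v5 : V)
    (h12 : G.Adj v1 v2) (h23 : G.Adj v2 v3) (h45 : G.Adj v4 v5)
    (hdist : List.Pairwise (· ≠ ·) [v1, v2, v3, v4, v5]) :
    ∃ (w : V) (c : G.Walk w w), c.IsCycle ∧
      s(v1, v2) ∈ c.edges ∧ s(v2, v3) ∈ c.edges ∧ s(v4, v5) ∈ c.edges := by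
  classical
  open CycleWedgeAux in
  obtain ⟨hcard, hconn⟩ := h3
  simp only [List.pairwise_cons, List.mem_cons, List.mem_singleton, List.not_mem_nil,
    List.Pairwise.nil, forall_eq_or_imp, forall_eq, or_false, and_true] at hdist
  obtain ⟨⟨n12, n13, n14, n15⟩, ⟨n23, n24, n25⟩, ⟨n34, n35⟩, n45, -⟩ := hdist
  -- basic edges of the auxiliary graph
  have e21 : (auxK G v1 v2 v3 v4 v5).Adj (some v2) (some v1) :=
    auxK_adj_ss.mpr ⟨h12.symm, fun _ => Or.inl rfl, fun h => Or.inl h.symm⟩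
  have e23' : (auxK G v1 v2 v3 v4 v5).Adj (some v2) (some v3) :=
    auxK_adj_ss.mpr ⟨h23, fun _ => Or.inr rfl, fun h => Or.inr h.symm⟩
  have e4 : (auxK G v1 v2 v3 v4 v5).Adj none (some v4) := auxK_adj_ns.mpr (Or.inl rfl)
  have e5 : (auxK G v1 v2 v3 v4 v5).Adj none (some v5) := auxK_adj_ns.mpr (Or.inr rfl)
  -- connectivity workhorses from 3-connectivity
  have key1 : ∀ a b : V, a ≠ v2 → b ≠ v2 → ∃ p : G.Walk a b, v2 ∉ p.support := by
    intro a b ha hb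
    have hc : ({v2} : Finset V).card < 3 := by simp
    obtain ⟨p, hp⟩ := walks_avoiding G (↑({v2} : Finset V)) (hconn _ hc) (a := a) (b := b)
      (by simp [ha]) (by simp [hb])
    exact ⟨p, fun hh => hp v2 hh (by simp)⟩
  have key2 : ∀ x : V, x ≠ v2 → ∀ a b : V, a ≠ v2 → a ≠ x → b ≠ v2 → b ≠ x →
      ∃ p : G.Walk a b, v2 ∉ p.support ∧ x ∉ p.support := by
    intro x hx a b ha2 hax hb2 hbx
    have hc : ({v2, x} : Finset V).card < 3 := by
      have := Finset.card_insert_le v2 ({x} : Finset V)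
      simp only [Finset.card_singleton] at this
      omega
    obtain ⟨p, hp⟩ := walks_avoiding G (↑({v2, x} : Finset V)) (hconn _ hc) (a := a) (b := b)
      (by simp [ha2, hax]) (by simp [hb2, hbx])
    exact ⟨p, fun hh => hp v2 hh (by simp), fun hh => hp x hh (by simp)⟩
  have conn1 : ∀ a₀ b₀ : V, a₀ ≠ v2 → b₀ ≠ v2 →
      ∃ p : (auxK G v1 v2 v3 v4 v5).Walk (some a₀) (some b₀),
        ∀ z ∈ p.support, z ≠ none ∧ z ≠ some v2 := by
    intro a₀ b₀ ha hb
    obtain ⟨m, hm⟩ := key1 a₀ b₀ ha hb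
    obtain ⟨q, hq⟩ := liftWalk m hm
    refine ⟨q, fun z hz => ?_⟩
    rw [hq, List.mem_map] at hz
    obtain ⟨y, hy, rfl⟩ := hz
    exact ⟨by simp, by simp; exact fun hh => hm (hh ▸ hy)⟩
  have core : ∀ x a₀ b₀ : V, a₀ ≠ v2 → a₀ ≠ x → b₀ ≠ v2 → b₀ ≠ x →
      ∃ p : (auxK G v1 v2 v3 v4 v5).Walk (some a₀) (some b₀),
        ∀ z ∈ p.support, z ≠ none ∧ z ≠ some v2 ∧ z ≠ some x := by
    intro x a₀ b₀ ha2 hax hb2 hbx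
    rcases eq_or_ne x v2 with rfl | hx2
    · obtain ⟨p, hp⟩ := conn1 a₀ b₀ ha2 hb2
      exact ⟨p, fun z hz => ⟨(hp z hz).1, (hp z hz).2, (hp z hz).2⟩⟩
    · obtain ⟨m, hm2, hmx⟩ := key2 x hx2 a₀ b₀ ha2 hax hb2 hbx
      obtain ⟨q, hq⟩ := liftWalk m hm2
      refine ⟨q, fun z hz => ?_⟩
      rw [hq, List.mem_map] at hz
      obtain ⟨y, hy, rfl⟩ := hz
      refine ⟨by simp, by simp; exact fun hh => hm2 (hh ▸ hy),
        by simp; exact fun hh => hmx (hh ▸ hy)⟩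
  have reduce : ∀ (x : V) (a : Option V), a ≠ some x →
      ∃ (a' : V) (pre : (auxK G v1 v2 v3 v4 v5).Walk a (some a')), a' ≠ v2 ∧ a' ≠ x ∧
        ∀ z ∈ pre.support, z = a ∨ z = some a' := by
    intro x a ha
    rcases a with _ | c
    · rcases eq_or_ne x v4 with rfl | hx4
      · exact ⟨v5, Walk.cons e5 Walk.nil, Ne.symm n25, Ne.symm n45,
          fun z hz => by simpa using hz⟩
      · exact ⟨v4, Walk.cons e4 Walk.nil, Ne.symm n24, fun hh => hx4 hh.symm,
          fun z hz => by simpa using hz⟩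
    · by_cases hcv : c = v2
      · rcases eq_or_ne x v1 with hx1 | hx1
        · refine ⟨v3, (Walk.cons e23' Walk.nil).copy (by rw [hcv]) rfl, Ne.symm n23, ?_, ?_⟩
          · rw [hx1]; exact Ne.symm n13
          · intro z hz
            rw [Walk.support_copy] at hz
            have hz' : z = some v2 ∨ z = some v3 := by simpa using hz
            rcases hz' with rfl | rfl
            · exact Or.inl (by rw [hcv])
            · exact Or.inr rfl
        · refine ⟨v1, (Walk.cons e21 Walk.nil).copy (by rw [hcv]) rfl, n12,
            fun hh => hx1 hh.symm, ?_⟩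
          intro z hz
          rw [Walk.support_copy] at hz
          have hz' : z = some v2 ∨ z = some v1 := by simpa using hz
          rcases hz' with rfl | rfl
          · exact Or.inl (by rw [hcv])
          · exact Or.inr rfl
      · exact ⟨c, Walk.nil, hcv, fun hh => ha (congrArg some hh),
          fun z hz => Or.inl (by simpa using hz)⟩
  have reduce0 : ∀ a : Option V, a ≠ none →
      ∃ (a' : V) (pre : (auxK G v1 v2 v3 v4 v5).Walk a (some a')), a' ≠ v2 ∧
        ∀ z ∈ pre.support, z ≠ none := by
    intro a ha
    rcases a with _ | c
    · exact absurd rfl ha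
    · by_cases hcv : c = v2
      · refine ⟨v1, (Walk.cons e21 Walk.nil).copy (by rw [hcv]) rfl, n12, fun z hz => ?_⟩
        rw [Walk.support_copy] at hz
        have hz' : z = some v2 ∨ z = some v1 := by simpa using hz
        rcases hz' with rfl | rfl <;> simp
      · refine ⟨c, Walk.nil, hcv, fun z hz => ?_⟩
        have hz' : z = some c := by simpa using hz
        subst hz'; simp
  have hK : ∀ w a b : Option V, a ≠ w → b ≠ w →
      ∃ p : (auxK G v1 v2 v3 v4 v5).Walk a b, w ∉ p.support := by
    intro w a b haw hbw
    rcases w with _ | x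
    · obtain ⟨a', prea, ha', hprea⟩ := reduce0 a haw
      obtain ⟨b', preb, hb', hpreb⟩ := reduce0 b hbw
      obtain ⟨mid, hmid⟩ := conn1 a' b' ha' hb'
      refine ⟨prea.append (mid.append preb.reverse), ?_⟩
      intro hh
      rw [Walk.mem_support_append_iff] at hh
      rcases hh with hh | hh
      · exact hprea _ hh rfl
      rw [Walk.mem_support_append_iff] at hh
      rcases hh with hh | hh
      · exact (hmid _ hh).1 rfl
      · rw [Walk.support_reverse, List.mem_reverse] at hh
        exact hpreb _ hh rfl
    · obtain ⟨a', prea, ha2, hax, hprea⟩ := reduce x a haw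
      obtain ⟨b', preb, hb2, hbx, hpreb⟩ := reduce x b hbw
      obtain ⟨mid, hmid⟩ := core x a' b' ha2 hax hb2 hbx
      refine ⟨prea.append (mid.append preb.reverse), ?_⟩
      intro hh
      rw [Walk.mem_support_append_iff] at hh
      rcases hh with hh | hh
      · rcases hprea _ hh with h' | h'
        · exact haw h'.symm
        · exact hax (Option.some.inj h').symm
      rw [Walk.mem_support_append_iff] at hh
      rcases hh with hh | hh
      · exact (hmid _ hh).2.2 rfl
      · rw [Walk.support_reverse, List.mem_reverse] at hh
        rcases hpreb _ hh with h' | h'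
        · exact hbw h'.symm
        · exact hbx (Option.some.inj h').symm
  obtain ⟨R0, -⟩ := hK (some v4) (some v2) none (by simp [n24]) (by simp)
  obtain ⟨p, q, hp, hq, hcom⟩ := two_paths (auxK G v1 v2 v3 v4 v5) hK (some v2) none
    (by simp) R0
  obtain ⟨c1, c4, P, hc1, hc4, hPpath, hPv2, hPsub⟩ := extract n24 n25 hp
  obtain ⟨d1, d4, Q, hd1, hd4, hQpath, hQv2, hQsub⟩ := extract n24 n25 hq
  have hdisj : ∀ z ∈ P.support, z ∉ Q.support := by
    intro z hz hz'
    rcases hcom (some z) (hPsub z hz) (hQsub z hz') with h' | h'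
    · exact hPv2 (Option.some.inj h' ▸ hz)
    · simp at h'
  have hne1 : c1 ≠ d1 := by
    intro hh
    exact hdisj c1 P.start_mem_support (by rw [hh]; exact Q.start_mem_support)
  have hne4 : c4 ≠ d4 := by
    intro hh
    exact hdisj c4 P.end_mem_support (by rw [hh]; exact Q.end_mem_support)
  rcases hc1 with rfl | rfl
  · rcases hd1 with rfl | rfl
    · exact absurd rfl hne1
    · rcases hc4 with rfl | rfl
      · rcases hd4 with rfl | rfl
        · exact absurd rfl hne4
        · exact assemble h12 h23 h45 n13 n24 n25 hPpath hQpath hPv2 hQv2 hdisj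
      · rcases hd4 with rfl | rfl
        · obtain ⟨w, cyc, hcyc, m1, m2, m3⟩ :=
            assemble h12 h23 h45.symm n13 n25 n24 hPpath hQpath hPv2 hQv2 hdisj
          exact ⟨w, cyc, hcyc, m1, m2, by rw [Sym2.eq_swap]; exact m3⟩
        · exact absurd rfl hne4
  · rcases hd1 with rfl | rfl
    · rcases hc4 with rfl | rfl
      · rcases hd4 with rfl | rfl
        · exact absurd rfl hne4
        · obtain ⟨w, cyc, hcyc, m1, m2, m3⟩ :=
            assemble h23.symm h12.symm h45 (Ne.symm n13) n24 n25 hPpath hQpath hPv2 hQv2 hdisj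
          exact ⟨w, cyc, hcyc, by rw [Sym2.eq_swap]; exact m2, by rw [Sym2.eq_swap]; exact m1, m3⟩
      · rcases hd4 with rfl | rfl
        · obtain ⟨w, cyc, hcyc, m1, m2, m3⟩ :=
            assemble h23.symm h12.symm h45.symm (Ne.symm n13) n25 n24 hPpath hQpath hPv2 hQv2 hdisj
          exact ⟨w, cyc, hcyc, by rw [Sym2.eq_swap]; exact m2, by rw [Sym2.eq_swap]; exact m1,
            by rw [Sym2.eq_swap]; exact m3⟩
        · exact absurd rfl hne4
    · exact absurd rfl hne1
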